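/- Let G ~ G(n,p) with p ≥ ln n / n. Then asymptotically almost surely, for every pair of disjoint vertex sets A, B the number of edges between A and B is less than 0.8·np·√(|A||B|). -/

import Mathlib

open Filter

/-- The probability that the binomial random graph `G(n,p)` satisfies property `A`. -/
noncomputable def prG (n : ℕ) (p : ℝ) (A : SimpleGraph (Fin n) → Prop) : ℝ :=
  open scoped Classical in
  ∑ E ∈ (⊤ : SimpleGraph (Fin n)).edgeFinset.powerset,
    if A (SimpleGraph.fromEdgeSet (↑E : Set (Sym2 (Fin n)))) then
      p ^ E.card * (1 - p) ^ (n.choose 2 - E.card)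
    else 0

/-- The number of edges of `G` between the sets `A` and `B` (counted as ordered
pairs with first coordinate in `A`; for disjoint `A`, `B` this is `e(A,B)`). -/
noncomputable def eAB {n : ℕ} (G : SimpleGraph (Fin n)) (A B : Finset (Fin n)) : ℕ :=
  Set.ncard {x : Fin n × Fin n | x.1 ∈ A ∧ x.2 ∈ B ∧ G.Adj x.1 x.2}

open Finset Real
open scoped Classical

set_option maxHeartbeats 1000000

namespace AAS

variable {n : ℕ} {p : ℝ}

abbrev T (n : ℕ) : Finset (Sym2 (Fin n)) := (⊤ : SimpleGraph (Fin n)).edgeFinset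

/-- number of edges of `G` among a finite set `S` of potential edges -/
noncomputable def cnt {n : ℕ} (G : SimpleGraph (Fin n)) (S : Finset (Sym2 (Fin n))) : ℕ :=
  (S.filter (fun e => e ∈ G.edgeSet)).card

lemma card_T (n : ℕ) : (T n).card = n.choose 2 := by
  simpa using SimpleGraph.card_edgeFinset_top_eq_card_choose_two (V := Fin n)

lemma sum_prod_w (f : Sym2 (Fin n) → ℝ) :
    ∑ E ∈ (T n).powerset, (∏ e ∈ E, f e) * (1 - p) ^ (n.choose 2 - E.card)
      = ∏ e ∈ T n, (f e + (1 - p)) := by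
  rw [Finset.prod_add]
  refine Finset.sum_congr rfl fun E hE => ?_
  rw [Finset.mem_powerset] at hE
  rw [Finset.prod_const, Finset.card_sdiff_of_subset hE, card_T]

lemma sum_w : ∑ E ∈ (T n).powerset, p ^ E.card * (1 - p) ^ (n.choose 2 - E.card) = 1 := by
  have := sum_prod_w (n := n) (p := p) (fun _ => p)
  simp only [Finset.prod_const] at this
  rw [this, ]
  simp

lemma w_nonneg (hp0 : 0 ≤ p) (hp1 : p ≤ 1) (E : Finset (Sym2 (Fin n))) :
    0 ≤ p ^ E.card * (1 - p) ^ (n.choose 2 - E.card) :=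
  mul_nonneg (pow_nonneg hp0 _) (pow_nonneg (by linarith) _)

/-- key moment computation -/
lemma sum_w_exp (S : Finset (Sym2 (Fin n))) (hS : S ⊆ T n) (lam : ℝ) :
    ∑ E ∈ (T n).powerset,
      (p ^ E.card * (1 - p) ^ (n.choose 2 - E.card)) * Real.exp lam ^ (E ∩ S).card
      = ((1 - p) + p * Real.exp lam) ^ S.card := by
  have key : ∀ E ∈ (T n).powerset,
      (p ^ E.card * (1 - p) ^ (n.choose 2 - E.card)) * Real.exp lam ^ (E ∩ S).card
      = (∏ e ∈ E, (if e ∈ S then p * Real.exp lam else p)) * (1 - p) ^ (n.choose 2 - E.card) := by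
    intro E _
    have hsub : E ∩ S ⊆ E := Finset.inter_subset_left
    rw [← Finset.prod_sdiff hsub]
    have h1 : ∏ e ∈ E ∩ S, (if e ∈ S then p * Real.exp lam else p) = (p * Real.exp lam) ^ (E ∩ S).card := by
      rw [Finset.prod_congr rfl fun e he => if_pos (Finset.mem_inter.mp he).2, Finset.prod_const]
    have h2 : ∏ e ∈ E \ (E ∩ S), (if e ∈ S then p * Real.exp lam else p) = p ^ (E \ (E ∩ S)).card := by
      rw [Finset.prod_congr rfl fun e he => if_neg ?_, Finset.prod_const]
      intro heS
      rcases Finset.mem_sdiff.mp he with ⟨heE, hnot⟩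
      exact hnot (Finset.mem_inter.mpr ⟨heE, heS⟩)
    rw [h1, h2, Finset.card_sdiff_of_subset hsub]
    have hc : (E ∩ S).card ≤ E.card := Finset.card_le_card hsub
    rw [mul_pow]
    rw [← pow_sub_mul_pow p hc]
    ring
  rw [Finset.sum_congr rfl key, sum_prod_w]
  have : ∀ e ∈ T n, ((if e ∈ S then p * Real.exp lam else p) + (1 - p))
      = (if e ∈ S then p * Real.exp lam + (1-p) else 1) := by
    intro e _; split <;> ring
  rw [Finset.prod_congr rfl this, ← Finset.prod_sdiff hS]
  have hA : ∏ e ∈ T n \ S, (if e ∈ S then p * Real.exp lam + (1-p) else 1) = 1 := by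
    rw [Finset.prod_congr rfl fun e he => if_neg (Finset.mem_sdiff.mp he).2]
    exact Finset.prod_const_one
  have hB : ∏ e ∈ S, (if e ∈ S then p * Real.exp lam + (1-p) else 1)
      = (p * Real.exp lam + (1-p)) ^ S.card := by
    rw [Finset.prod_congr rfl fun e he => if_pos he, Finset.prod_const]
  rw [hA, hB, one_mul]
  ring
lemma prG_def (n : ℕ) (p : ℝ) (A : SimpleGraph (Fin n) → Prop) :
    prG n p A = ∑ E ∈ (T n).powerset,
      if A (SimpleGraph.fromEdgeSet (↑E : Set (Sym2 (Fin n)))) then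
        p ^ E.card * (1 - p) ^ (n.choose 2 - E.card) else 0 := rfl

lemma prG_mono (hp0 : 0 ≤ p) (hp1 : p ≤ 1) {A B : SimpleGraph (Fin n) → Prop}
    (h : ∀ G, A G → B G) : prG n p A ≤ prG n p B := by
  rw [prG_def, prG_def]
  refine Finset.sum_le_sum fun E _ => ?_
  by_cases hA : A (SimpleGraph.fromEdgeSet (↑E : Set (Sym2 (Fin n))))
  · rw [if_pos hA, if_pos (h _ hA)]
  · rw [if_neg hA]
    split
    · exact w_nonneg hp0 hp1 E
    · exact le_rfl

lemma prG_le_one (hp0 : 0 ≤ p) (hp1 : p ≤ 1) (A : SimpleGraph (Fin n) → Prop) :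
    prG n p A ≤ 1 := by
  have h2 : prG n p A ≤ ∑ E ∈ (T n).powerset, p ^ E.card * (1 - p) ^ (n.choose 2 - E.card) := by
    rw [prG_def]
    refine Finset.sum_le_sum fun E _ => ?_
    split
    · exact le_rfl
    · exact w_nonneg hp0 hp1 E
  rw [sum_w] at h2; exact h2

lemma cnt_fromEdgeSet (E : Finset (Sym2 (Fin n))) (hE : E ∈ (T n).powerset)
    (S : Finset (Sym2 (Fin n))) :
    cnt (SimpleGraph.fromEdgeSet (↑E : Set (Sym2 (Fin n)))) S = (E ∩ S).card := by
  rw [Finset.mem_powerset] at hE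
  unfold cnt
  rw [Finset.inter_comm, ← Finset.filter_mem_eq_inter]
  congr 1
  have key : ∀ e ∈ S, e ∈ (SimpleGraph.fromEdgeSet (↑E : Set (Sym2 (Fin n)))).edgeSet ↔ e ∈ E := ?_
  · convert Finset.filter_congr key
  intro e heS
  rw [SimpleGraph.edgeSet_fromEdgeSet]
  constructor
  · rintro ⟨he, -⟩; exact_mod_cast he
  · intro heE
    refine ⟨by exact_mod_cast heE, ?_⟩
    have := hE heE
    rw [SimpleGraph.mem_edgeFinset, SimpleGraph.edgeSet_top] at this
    exact this

/-- Chernoff-type bound for a single upper tail event. -/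
lemma prG_tail_le (hp0 : 0 ≤ p) (hp1 : p ≤ 1) (S : Finset (Sym2 (Fin n))) (hS : S ⊆ T n)
    (tau lam : ℝ) (hlam : 0 ≤ lam) :
    prG n p (fun G => tau ≤ (cnt G S : ℝ))
      ≤ Real.exp (-(lam * tau)) * ((1 - p) + p * Real.exp lam) ^ S.card := by
  rw [prG_def]
  have hle : ∀ E ∈ (T n).powerset,
      (if tau ≤ ((cnt (SimpleGraph.fromEdgeSet (↑E : Set (Sym2 (Fin n)))) S : ℕ) : ℝ) then
        p ^ E.card * (1 - p) ^ (n.choose 2 - E.card) else 0)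
      ≤ Real.exp (-(lam * tau)) *
          ((p ^ E.card * (1 - p) ^ (n.choose 2 - E.card)) * Real.exp lam ^ (E ∩ S).card) := by
    intro E hE
    rw [cnt_fromEdgeSet E hE]
    have hw0 := w_nonneg (n := n) hp0 hp1 E
    split
    · rename_i h
      have h1 : (1 : ℝ) ≤ Real.exp (-(lam * tau)) * Real.exp lam ^ (E ∩ S).card := by
        rw [← Real.exp_nat_mul, ← Real.exp_add, ← Real.exp_zero]
        apply Real.exp_le_exp.mpr
        have : lam * tau ≤ lam * (((E ∩ S).card : ℕ) : ℝ) := mul_le_mul_of_nonneg_left h hlam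
        linarith
      calc p ^ E.card * (1 - p) ^ (n.choose 2 - E.card)
          = (p ^ E.card * (1 - p) ^ (n.choose 2 - E.card)) * 1 := by ring
        _ ≤ _ := by nlinarith [mul_le_mul_of_nonneg_left h1 hw0]
    · have h2 : (0:ℝ) ≤ Real.exp lam ^ (E ∩ S).card := by positivity
      positivity
  calc _ ≤ ∑ E ∈ (T n).powerset, Real.exp (-(lam * tau)) *
          ((p ^ E.card * (1 - p) ^ (n.choose 2 - E.card)) * Real.exp lam ^ (E ∩ S).card) :=
        Finset.sum_le_sum hle
    _ = _ := by rw [← Finset.mul_sum, sum_w_exp S hS lam]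

/-- Union bound. -/
lemma prG_union_bound (hp0 : 0 ≤ p) (hp1 : p ≤ 1) {ι : Type*} (I : Finset ι)
    (Bad : ι → SimpleGraph (Fin n) → Prop) :
    1 - ∑ i ∈ I, prG n p (Bad i) ≤ prG n p (fun G => ∀ i ∈ I, ¬ Bad i G) := by
  have key : ∑ E ∈ (T n).powerset, p ^ E.card * (1 - p) ^ (n.choose 2 - E.card)
      ≤ prG n p (fun G => ∀ i ∈ I, ¬ Bad i G) + ∑ i ∈ I, prG n p (Bad i) := by
    simp only [prG_def]
    rw [Finset.sum_comm, ← Finset.sum_add_distrib]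
    refine Finset.sum_le_sum fun E hE => ?_
    have hw0 : (0:ℝ) ≤ p ^ E.card * (1 - p) ^ (n.choose 2 - E.card) := w_nonneg hp0 hp1 E
    by_cases hg : ∀ i ∈ I, ¬ Bad i (SimpleGraph.fromEdgeSet (↑E : Set (Sym2 (Fin n))))
    · rw [if_pos hg]
      have h0 : (0:ℝ) ≤ ∑ i ∈ I, (if Bad i (SimpleGraph.fromEdgeSet (↑E : Set (Sym2 (Fin n)))) then
          p ^ E.card * (1 - p) ^ (n.choose 2 - E.card) else 0) :=
        Finset.sum_nonneg fun i _ => by split <;> simp [hw0]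
      linarith
    · push_neg at hg
      obtain ⟨i0, hi0, hbad⟩ := hg
      rw [if_neg (by push_neg; exact ⟨i0, hi0, hbad⟩)]
      have hsingle : p ^ E.card * (1 - p) ^ (n.choose 2 - E.card)
          ≤ ∑ i ∈ I, (if Bad i (SimpleGraph.fromEdgeSet (↑E : Set (Sym2 (Fin n)))) then
            p ^ E.card * (1 - p) ^ (n.choose 2 - E.card) else 0) := by
        have := Finset.single_le_sum
          (f := fun i => if Bad i (SimpleGraph.fromEdgeSet (↑E : Set (Sym2 (Fin n)))) then
            p ^ E.card * (1 - p) ^ (n.choose 2 - E.card) else 0)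
          (fun i _ => by split <;> simp [hw0]) hi0
        simpa [if_pos hbad] using this
      linarith
  rw [sum_w] at key
  linarith


/-- potential edges between A and B -/
def pairS (A B : Finset (Fin n)) : Finset (Sym2 (Fin n)) :=
  (A ×ˢ B).image (fun x => s(x.1, x.2))

lemma pairS_comm (A B : Finset (Fin n)) : pairS A B = pairS B A := by
  unfold pairS
  ext e
  simp only [Finset.mem_image, Finset.mem_product]
  constructor
  · rintro ⟨⟨u, v⟩, ⟨hu, hv⟩, rfl⟩
    exact ⟨(v, u), ⟨hv, hu⟩, Sym2.eq_swap⟩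
  · rintro ⟨⟨u, v⟩, ⟨hu, hv⟩, rfl⟩
    exact ⟨(v, u), ⟨hv, hu⟩, Sym2.eq_swap⟩

lemma pairS_subset_T {A B : Finset (Fin n)} (h : Disjoint A B) : pairS A B ⊆ T n := by
  intro e he
  rcases Finset.mem_image.mp he with ⟨⟨u, v⟩, huv, rfl⟩
  rcases Finset.mem_product.mp huv with ⟨hu, hv⟩
  rw [SimpleGraph.mem_edgeFinset, SimpleGraph.mem_edgeSet, SimpleGraph.top_adj]
  exact fun huv' => Finset.disjoint_left.mp h hu (huv' ▸ hv)

lemma injOn_pairS {A B : Finset (Fin n)} (h : Disjoint A B) :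
    Set.InjOn (fun x : Fin n × Fin n => s(x.1, x.2)) (A ×ˢ B : Finset (Fin n × Fin n)) := by
  rintro ⟨u, v⟩ huv ⟨u', v'⟩ huv' heq
  rcases Finset.mem_coe.mp huv |> Finset.mem_product.mp with ⟨hu, hv⟩
  rcases Finset.mem_coe.mp huv' |> Finset.mem_product.mp with ⟨hu', hv'⟩
  simp only [Sym2.eq, Sym2.rel_iff', Prod.mk.injEq, Prod.swap_prod_mk] at heq
  rcases heq with ⟨h1, h2⟩ | ⟨h1, h2⟩
  · simp [h1, h2]
  · exact (Finset.disjoint_left.mp h hu (by rw [h1]; exact hv')).elim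

lemma card_pairS {A B : Finset (Fin n)} (h : Disjoint A B) :
    (pairS A B).card = A.card * B.card := by
  unfold pairS
  rw [Finset.card_image_of_injOn (injOn_pairS h), Finset.card_product]

lemma eAB_eq_cnt {G : SimpleGraph (Fin n)} {A B : Finset (Fin n)} (h : Disjoint A B) :
    eAB G A B = cnt G (pairS A B) := by
  unfold eAB cnt
  have hset : {x : Fin n × Fin n | x.1 ∈ A ∧ x.2 ∈ B ∧ G.Adj x.1 x.2}
      = ↑((A ×ˢ B).filter (fun x => G.Adj x.1 x.2)) := by
    ext ⟨u, v⟩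
    simp [Finset.mem_filter, Finset.mem_product, and_assoc]
  rw [hset, Set.ncard_coe_finset]
  apply Finset.card_bij (fun x _ => s(x.1, x.2))
  · rintro ⟨u, v⟩ huv
    rcases Finset.mem_filter.mp huv with ⟨hm, hadj⟩
    rcases Finset.mem_product.mp hm with ⟨hu, hv⟩
    refine Finset.mem_filter.mpr ⟨Finset.mem_image.mpr ⟨(u, v), Finset.mem_product.mpr ⟨hu, hv⟩, rfl⟩, ?_⟩
    exact hadj
  · rintro ⟨u, v⟩ huv ⟨u', v'⟩ huv' heq
    exact injOn_pairS h (Finset.mem_filter.mp huv).1 (Finset.mem_filter.mp huv').1 heq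
  · intro e he
    rcases Finset.mem_filter.mp he with ⟨him, hadj⟩
    rcases Finset.mem_image.mp him with ⟨⟨u, v⟩, huv, rfl⟩
    rcases Finset.mem_product.mp huv with ⟨hu, hv⟩
    rw [SimpleGraph.mem_edgeSet] at hadj
    exact ⟨(u, v), Finset.mem_filter.mpr ⟨Finset.mem_product.mpr ⟨hu, hv⟩, hadj⟩, rfl⟩

lemma cnt_le_card (G : SimpleGraph (Fin n)) (S : Finset (Sym2 (Fin n))) :
    cnt G S ≤ S.card := Finset.card_le_card (Finset.filter_subset _ _)

lemma cnt_mono (G : SimpleGraph (Fin n)) {S S' : Finset (Sym2 (Fin n))} (h : S ⊆ S') :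
    cnt G S ≤ cnt G S' := Finset.card_le_card (Finset.filter_subset_filter _ h)

lemma pairS_mono {A B A' B' : Finset (Fin n)} (hA : A ⊆ A') (hB : B ⊆ B') :
    pairS A B ⊆ pairS A' B' :=
  Finset.image_subset_image (Finset.product_subset_product hA hB)

lemma pairS_biUnion (A B : Finset (Fin n)) :
    pairS A B = A.biUnion (fun v => pairS {v} B) := by
  unfold pairS
  ext e
  simp only [Finset.mem_image, Finset.mem_product, Finset.mem_biUnion, Finset.mem_singleton]
  constructor
  · rintro ⟨⟨u, v⟩, ⟨hu, hv⟩, rfl⟩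
    exact ⟨u, hu, ⟨(u, v), ⟨rfl, hv⟩, rfl⟩⟩
  · rintro ⟨u, hu, ⟨⟨u', v⟩, ⟨rfl, hv⟩, rfl⟩⟩
    exact ⟨(u', v), ⟨hu, hv⟩, rfl⟩

lemma cnt_pairS_le_sum (G : SimpleGraph (Fin n)) (A B : Finset (Fin n)) :
    cnt G (pairS A B) ≤ ∑ v ∈ A, cnt G (pairS {v} B) := by
  rw [pairS_biUnion]
  unfold cnt
  rw [Finset.filter_biUnion]
  exact Finset.card_biUnion_le


lemma pow_self_le_exp_mul_factorial : ∀ k : ℕ, (k:ℝ)^k ≤ Real.exp k * k.factorial := by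
  intro k
  induction k with
  | zero => simp
  | succ k ih =>
    rcases Nat.eq_zero_or_pos k with rfl | hk
    · simpa using Real.one_le_exp (by norm_num : (0:ℝ) ≤ 1)
    have hk0 : (0:ℝ) < k := by exact_mod_cast hk
    have h1 : ((k:ℝ)+1)^k ≤ Real.exp 1 * (k:ℝ)^k := by
      have e1 : ((k:ℝ)+1) = (k:ℝ) * (1 + 1/k) := by field_simp
      have h2 : (1 + 1/(k:ℝ))^k ≤ Real.exp (1/k) ^ k := by
        apply pow_le_pow_left₀ (by positivity)
        linarith [Real.add_one_le_exp (1/(k:ℝ))]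
      have h3 : Real.exp (1/(k:ℝ)) ^ k = Real.exp 1 := by
        rw [← Real.exp_nat_mul]
        congr 1
        field_simp
      rw [e1, mul_pow]
      calc (k:ℝ)^k * (1+1/(k:ℝ))^k ≤ (k:ℝ)^k * Real.exp 1 := by
            rw [← h3]; exact mul_le_mul_of_nonneg_left h2 (by positivity)
        _ = Real.exp 1 * (k:ℝ)^k := by ring
    have hfac : ((k+1).factorial : ℝ) = ((k:ℝ)+1) * k.factorial := by
      rw [Nat.factorial_succ]; push_cast; ring
    have hexp : Real.exp ((k:ℕ)+1 : ℕ) = Real.exp k * Real.exp 1 := by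
      push_cast; rw [← Real.exp_add]
    have hcast : (((k+1):ℕ):ℝ) = (k:ℝ)+1 := by push_cast; ring
    calc (((k+1):ℕ):ℝ)^(k+1) = ((k:ℝ)+1) * ((k:ℝ)+1)^k := by rw [hcast]; ring
      _ ≤ ((k:ℝ)+1) * (Real.exp 1 * (k:ℝ)^k) := by
          apply mul_le_mul_of_nonneg_left h1 (by positivity)
      _ ≤ ((k:ℝ)+1) * (Real.exp 1 * (Real.exp k * k.factorial)) := by
          apply mul_le_mul_of_nonneg_left _ (by positivity)
          apply mul_le_mul_of_nonneg_left ih (by positivity)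
      _ = Real.exp ((k:ℕ)+1 : ℕ) * ((k+1).factorial : ℝ) := by
          rw [hexp, hfac]; ring

lemma choose_mul_le_one {n a : ℕ} (hn : 1 ≤ n) :
    (n.choose a : ℝ) * ((a:ℝ)/(Real.exp 1 * n))^a ≤ 1 := by
  rcases Nat.eq_zero_or_pos a with rfl | ha
  · simp
  have hn0 : (0:ℝ) < n := by exact_mod_cast hn
  have hen : (0:ℝ) < Real.exp 1 * n := by positivity
  have h1 : (n.choose a : ℝ) * (a:ℝ)^a ≤ (Real.exp 1 * n)^a := by
    have hc : (n.choose a : ℝ) ≤ (n:ℝ)^a / a.factorial := Nat.choose_le_pow_div a n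
    have hkey : (a:ℝ)^a ≤ Real.exp a * a.factorial := pow_self_le_exp_mul_factorial a
    have hfa : (0:ℝ) < a.factorial := by exact_mod_cast a.factorial_pos
    have hexp : Real.exp (a:ℕ) = Real.exp 1 ^ a := by
      rw [← Real.exp_nat_mul]; congr 1; ring
    calc (n.choose a : ℝ) * (a:ℝ)^a ≤ ((n:ℝ)^a / a.factorial) * (Real.exp a * a.factorial) := by
          apply mul_le_mul hc hkey (by positivity) (by positivity)
      _ = (n:ℝ)^a * Real.exp a := by field_simp
      _ = (Real.exp 1 * n)^a := by rw [hexp, mul_pow]; ring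
  rw [div_pow, ← mul_div_assoc, div_le_one (by positivity)]
  exact h1

lemma sum_V_le (n : ℕ) (hn : 1 ≤ n) :
    ∑ A ∈ (Finset.univ : Finset (Finset (Fin n))), ((A.card:ℝ)/(Real.exp 1 * n))^(A.card)
      ≤ (n:ℝ) + 1 := by
  have := Finset.sum_powerset_apply_card (fun m => ((m:ℝ)/(Real.exp 1 * n))^m)
    (x := (Finset.univ : Finset (Fin n)))
  rw [Finset.powerset_univ] at this
  rw [this]
  have hcard : (Finset.univ : Finset (Fin n)).card = n := by simp
  calc ∑ m ∈ Finset.range ((Finset.univ : Finset (Fin n)).card + 1),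
        ((Finset.univ : Finset (Fin n)).card.choose m) • (((m:ℝ)/(Real.exp 1 * n))^m)
      ≤ ∑ m ∈ Finset.range ((Finset.univ : Finset (Fin n)).card + 1), 1 := by
        apply Finset.sum_le_sum
        intro m _
        rw [nsmul_eq_mul, hcard]
        exact choose_mul_le_one hn
    _ = (n:ℝ) + 1 := by rw [Finset.sum_const, hcard]; simp

lemma log_onesix : (0.405:ℝ) ≤ Real.log 1.6 := by
  set c := Real.sqrt 0.625 with hc
  have hc0 : 0 < c := Real.sqrt_pos.mpr (by norm_num)
  have hcle : c ≤ 0.791 := by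
    rw [hc, Real.sqrt_le_left (by norm_num)]
    norm_num
  have hlogc : Real.log c = Real.log 0.625 / 2 := Real.log_sqrt (by norm_num)
  have h2 : Real.log 0.625 = - Real.log 1.6 := by
    rw [show (0.625:ℝ) = (1.6)⁻¹ by norm_num, Real.log_inv]
  have h3 : Real.log c ≤ c - 1 := Real.log_le_sub_one_of_pos hc0
  rw [hlogc, h2] at h3
  linarith

lemma one_le_log_three : (1:ℝ) ≤ Real.log 3 := by
  rw [Real.le_log_iff_exp_le (by norm_num)]
  linarith [Real.exp_one_lt_d9]

lemma g_lb {r : ℝ} (hr : 1.6 ≤ r) : (0.03:ℝ) ≤ Real.log r - 1 + 1/r := by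
  have hr0 : (0:ℝ) < r := by linarith
  have h1 : Real.log (r/1.6) = Real.log r - Real.log 1.6 :=
    Real.log_div (by linarith) (by norm_num)
  have h2 : 1 - (r/1.6)⁻¹ ≤ Real.log (r/1.6) :=
    Real.one_sub_inv_le_log_of_pos (by positivity)
  have h3 : (r/1.6)⁻¹ = 1.6/r := by field_simp
  rw [h3, h1] at h2
  have h4 : (0.405:ℝ) ≤ Real.log 1.6 := log_onesix
  have h5 : 0.6/r ≤ 0.375 := by
    rw [div_le_iff₀ hr0]; linarith
  have h6 : 1.6/r - 1/r = 0.6/r := by field_simp; ring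
  linarith

lemma log_le_sub_one' {x : ℝ} (hx : 0 < x) : Real.log x ≤ x - 1 := Real.log_le_sub_one_of_pos hx


/-- The key numerical inequality for the pair tail bound. -/
lemma key_pair_ineq (n p a b : ℝ) (hn0 : 0 ≤ n)
    (hp0 : 0 ≤ p) (hL : 3000 ≤ Real.log n) (hnp : Real.log n ≤ n * p)
    (ha1 : 1 ≤ a) (hab : a ≤ b) (hb25 : b ≤ 25 * a) (habn : a + b ≤ n)
    (hlow : (0.8 * (n*p))^2 ≤ a * b) :
    p * (0.8*n/Real.sqrt (a*b) - 1) * (a*b)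
      - Real.log (0.8*n/Real.sqrt (a*b)) * (0.8*n*p*Real.sqrt (a*b))
    ≤ -(a * Real.log (Real.exp 1 * n / a) + b * Real.log (Real.exp 1 * n / b)
        + 4 * Real.log n) := by
  have hb1 : (1:ℝ) ≤ b := le_trans ha1 hab
  have hab0 : (0:ℝ) ≤ a * b := by nlinarith
  generalize hsdef : Real.sqrt (a*b) = s
  have hs2 : s^2 = a*b := by rw [← hsdef]; exact Real.sq_sqrt hab0
  have hs1 : (1:ℝ) ≤ s := by
    rw [← hsdef, show (1:ℝ) = Real.sqrt 1 by simp]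
    exact Real.sqrt_le_sqrt (by nlinarith)
  have hs0 : (0:ℝ) < s := by linarith
  have hn1 : (1:ℝ) < n := by
    by_contra hc
    push_neg at hc
    have := Real.log_nonpos hn0 hc
    linarith
  have hnpos : (0:ℝ) < n := by linarith
  have hs5a : s ≤ 5*a := by nlinarith
  have hb5s : b ≤ 5*s := by nlinarith
  have has : a ≤ s := by nlinarith
  have hsn2 : s ≤ n/2 := by nlinarith
  have hsnp : 0.8*(n*p) ≤ s := by nlinarith
  have hsL : 0.8*(Real.log n) ≤ s := by nlinarith
  generalize hrdef : 0.8*n/s = r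
  have hr16 : (1.6:ℝ) ≤ r := by
    rw [← hrdef, le_div_iff₀ hs0]; nlinarith
  have hr0 : (0:ℝ) < r := by linarith
  have hrs : r * s = 0.8 * n := by
    rw [← hrdef]; field_simp
  obtain ⟨u, hudef⟩ : ∃ u, Real.log (n/s) = u := ⟨_, rfl⟩
  have hu0 : (0:ℝ) ≤ u := by
    rw [← hudef]
    apply Real.log_nonneg
    rw [le_div_iff₀ hs0]; linarith
  have hlogr : Real.log r = Real.log 0.8 + u := by
    rw [← hrdef, ← hudef, show 0.8*n/s = 0.8*(n/s) by ring,
      Real.log_mul (by norm_num) (by positivity)]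
  have hlog08 : (-0.25:ℝ) ≤ Real.log 0.8 := by
    have h1 : Real.log 1.25 ≤ 0.25 := by
      linarith [Real.log_le_sub_one_of_pos (show (0:ℝ) < 1.25 by norm_num)]
    have h2 : Real.log 0.8 = - Real.log 1.25 := by
      rw [show (0.8:ℝ) = (1.25)⁻¹ by norm_num, Real.log_inv]
    linarith
  obtain ⟨G, hGdef⟩ : ∃ G, Real.log r - 1 + 1/r = G := ⟨_, rfl⟩
  have hG003 : (0.03:ℝ) ≤ G := hGdef ▸ g_lb hr16
  -- rewrite the LHS
  have hLHS : p * (r - 1) * (a*b) - Real.log r * (0.8*n*p*s) = -((0.8*n*p*s) * G) := by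
    rw [← hGdef, ← hs2, ← hrs]
    field_simp
    ring
  rw [hLHS]
  -- bound the RHS logs
  have hloga : 0 ≤ Real.log a := Real.log_nonneg ha1
  have hna : Real.log (Real.exp 1 * n / a) ≤ 5 + u := by
    have hea : Real.exp 1 * n / a = Real.exp 1 * (n / a) := by ring
    rw [hea, Real.log_mul (Real.exp_ne_zero 1) (by positivity), Real.log_exp]
    have h1 : Real.log (n/a) ≤ Real.log (5*(n/s)) := by
      apply Real.log_le_log (by positivity)
      rw [show 5*(n/s) = (5*n)/s by ring, div_le_div_iff₀ (by linarith : (0:ℝ) < a) hs0]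
      nlinarith
    have h2 : Real.log (5*(n/s)) = Real.log 5 + u := by
      rw [Real.log_mul (by norm_num) (by positivity), hudef]
    have h3 : Real.log 5 ≤ 4 := by
      linarith [Real.log_le_sub_one_of_pos (show (0:ℝ) < 5 by norm_num)]
    linarith
  have hnb : Real.log (Real.exp 1 * n / b) ≤ Real.log (Real.exp 1 * n / a) := by
    apply Real.log_le_log (by positivity)
    apply div_le_div_of_nonneg_left (by positivity) (by linarith) hab
  have hposena : (0:ℝ) ≤ Real.log (Real.exp 1 * n / a) := by
    apply Real.log_nonneg
    rw [le_div_iff₀ (by linarith : (0:ℝ) < a)]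
    nlinarith [Real.add_one_le_exp (1:ℝ), Real.exp_pos (1:ℝ)]
  -- main comparison
  have hab6s : a + b ≤ 6*s := by linarith
  have hRHS : a * Real.log (Real.exp 1 * n / a) + b * Real.log (Real.exp 1 * n / b)
        + 4*Real.log n ≤ s*(35 + 6*u) := by
    have h1 : a * Real.log (Real.exp 1 * n / a) ≤ a * (5+u) :=
      mul_le_mul_of_nonneg_left hna (by linarith)
    have h2 : b * Real.log (Real.exp 1 * n / b) ≤ b * (5+u) :=
      mul_le_mul_of_nonneg_left (le_trans hnb hna) (by linarith)
    have h3 : 4*Real.log n ≤ 5*s := by linarith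
    have h4 : (a+b)*(5+u) ≤ (6*s)*(5+u) :=
      mul_le_mul_of_nonneg_right hab6s (by linarith)
    linarith
  have hcore : 35 + 6*u ≤ 0.8*(Real.log n)*G := by
    rcases le_total u 2 with hu2 | hu2
    · have hp1 : (0:ℝ) ≤ (Real.log n - 3000)*(G - 0.03) :=
        mul_nonneg (by linarith) (by linarith)
      linarith [hp1, sq_nonneg (Real.log n - 3000), sq_nonneg (G-0.03)]
    · have hGu : u - 1.25 ≤ G := by
        rw [← hGdef, hlogr]
        have : (0:ℝ) < 1/r := by positivity
        linarith
      have h0375 : 0.375 * u ≤ G := by linarith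
      have hq := mul_le_mul_of_nonneg_left h0375 (show (0:ℝ) ≤ Real.log n by linarith)
      have hr2 := mul_le_mul_of_nonneg_right hL hu0
      linarith [hq, hr2]
  have hLG : s * (35 + 6*u) ≤ (0.8*(Real.log n)*s) * G := by
    have := mul_le_mul_of_nonneg_left hcore (le_of_lt hs0)
    linarith [this]
  have hfin : (0.8*(Real.log n)*s) * G ≤ (0.8*n*p*s) * G := by
    have hls : (Real.log n)*s ≤ (n*p)*s := mul_le_mul_of_nonneg_right hnp (le_of_lt hs0)
    have h08 : 0.8*(Real.log n)*s ≤ 0.8*(n*p)*s := by linarith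
    have := mul_le_mul_of_nonneg_right h08 (by linarith : (0:ℝ) ≤ G)
    linarith [this]
  linarith

/-- The deterministic reduction: if no bad event occurs, the conclusion holds. -/
lemma deterministic {n : ℕ} {p : ℝ} (hnp0 : 0 ≤ (n:ℝ)*p) (G : SimpleGraph (Fin n))
    (h1 : ∀ v : Fin n,
      (cnt G (pairS {v} (Finset.univ.erase v)) : ℝ) < 4*(n:ℝ)*p)
    (h2 : ∀ A B : Finset (Fin n), Disjoint A B → 1 ≤ A.card → A.card ≤ B.card → B.card ≤ 25*A.card →
      (0.8*((n:ℝ)*p))^2 ≤ (A.card:ℝ)*(B.card:ℝ) →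
      (cnt G (pairS A B) : ℝ) < 0.8*(n:ℝ)*p*Real.sqrt ((A.card:ℝ)*B.card)) :
    ∀ A B : Finset (Fin n), Disjoint A B → A.Nonempty → B.Nonempty →
      (eAB G A B : ℝ) < 0.8*(n:ℝ)*p*Real.sqrt ((A.card:ℝ)*B.card) := by
  have key : ∀ A B : Finset (Fin n), Disjoint A B → A.Nonempty → B.Nonempty →
      A.card ≤ B.card →
      (cnt G (pairS A B) : ℝ) < 0.8*(n:ℝ)*p*Real.sqrt ((A.card:ℝ)*B.card) := by
    intro A B hd hA hB hcard
    have ha1 : (1:ℝ) ≤ A.card := by exact_mod_cast hA.card_pos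
    have hb1 : (1:ℝ) ≤ B.card := by exact_mod_cast hB.card_pos
    have hab0 : (0:ℝ) ≤ (A.card:ℝ)*B.card := by positivity
    have hs1 : (1:ℝ) ≤ Real.sqrt ((A.card:ℝ)*B.card) := by
      rw [show (1:ℝ) = Real.sqrt 1 by simp]
      exact Real.sqrt_le_sqrt (by nlinarith)
    by_cases hsmall : (A.card:ℝ)*(B.card:ℝ) < (0.8*((n:ℝ)*p))^2
    · -- few potential edges: deterministic bound
      have he : (cnt G (pairS A B) : ℝ) ≤ (A.card:ℝ)*B.card := by
        have := le_trans (cnt_le_card G (pairS A B)) (le_of_eq (card_pairS hd))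
        exact_mod_cast this
      have hslt : Real.sqrt ((A.card:ℝ)*B.card) < 0.8*((n:ℝ)*p) := by
        calc Real.sqrt ((A.card:ℝ)*B.card) < Real.sqrt ((0.8*((n:ℝ)*p))^2) :=
              Real.sqrt_lt_sqrt hab0 hsmall
          _ = 0.8*((n:ℝ)*p) := Real.sqrt_sq (by linarith)
      have hseq : (A.card:ℝ)*B.card
          = Real.sqrt ((A.card:ℝ)*B.card) * Real.sqrt ((A.card:ℝ)*B.card) :=
        (Real.mul_self_sqrt hab0).symm
      calc (cnt G (pairS A B) : ℝ) ≤ (A.card:ℝ)*B.card := he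
        _ = Real.sqrt ((A.card:ℝ)*B.card) * Real.sqrt ((A.card:ℝ)*B.card) := hseq
        _ < (0.8*((n:ℝ)*p)) * Real.sqrt ((A.card:ℝ)*B.card) := by
            apply mul_lt_mul_of_pos_right hslt (by linarith)
        _ = 0.8*(n:ℝ)*p*Real.sqrt ((A.card:ℝ)*B.card) := by ring
    · push_neg at hsmall
      by_cases hbal : B.card ≤ 25*A.card
      · exact h2 A B hd hA.card_pos hcard hbal hsmall
      · push_neg at hbal
        have h25 : (25:ℝ)*A.card ≤ B.card := by exact_mod_cast hbal.le
        -- degree bound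
        have hsum : (cnt G (pairS A B) : ℝ)
            ≤ ∑ v ∈ A, ((cnt G (pairS {v} (Finset.univ.erase v)) : ℝ)) := by
          have step1 : cnt G (pairS A B) ≤ ∑ v ∈ A, cnt G (pairS {v} B) :=
            cnt_pairS_le_sum G A B
          have step2 : ∑ v ∈ A, cnt G (pairS {v} B)
              ≤ ∑ v ∈ A, cnt G (pairS {v} (Finset.univ.erase v)) := by
            apply Finset.sum_le_sum
            intro v hv
            apply cnt_mono
            apply pairS_mono (le_refl _)
            intro u hu
            exact Finset.mem_erase.mpr ⟨fun h => Finset.disjoint_left.mp hd hv (h ▸ hu),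
              Finset.mem_univ u⟩
          calc (cnt G (pairS A B) : ℝ) ≤ (∑ v ∈ A, cnt G (pairS {v} B) : ℕ) := by
                exact_mod_cast step1
            _ ≤ ((∑ v ∈ A, cnt G (pairS {v} (Finset.univ.erase v)) : ℕ) : ℝ) := by
                exact_mod_cast step2
            _ = _ := by push_cast; rfl
        have hstrict : ∑ v ∈ A, ((cnt G (pairS {v} (Finset.univ.erase v)) : ℝ))
            < ∑ v ∈ A, (4*(n:ℝ)*p) :=
          Finset.sum_lt_sum_of_nonempty hA (fun v _ => h1 v)
        rw [Finset.sum_const, nsmul_eq_mul] at hstrict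
        have h5s : 5*(A.card:ℝ) ≤ Real.sqrt ((A.card:ℝ)*B.card) := by
          rw [show 5*(A.card:ℝ) = Real.sqrt ((5*(A.card:ℝ))^2) by
            rw [Real.sqrt_sq (by linarith)]]
          apply Real.sqrt_le_sqrt
          nlinarith
        have hfin : (A.card:ℝ) * (4*(n:ℝ)*p) ≤ 0.8*(n:ℝ)*p*Real.sqrt ((A.card:ℝ)*B.card) := by
          have := mul_le_mul_of_nonneg_left h5s (show (0:ℝ) ≤ 0.8*((n:ℝ)*p) by linarith)
          nlinarith [this]
        linarith
  intro A B hd hA hB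
  rcases le_total A.card B.card with hc | hc
  · rw [eAB_eq_cnt hd]
    exact key A B hd hA hB hc
  · rw [eAB_eq_cnt hd, pairS_comm]
    have := key B A hd.symm hB hA hc
    rw [show (A.card:ℝ)*B.card = (B.card:ℝ)*A.card by ring]
    exact this

lemma exp_neg_mul_log {c : ℝ} (hc : 0 < c) (k : ℕ) :
    Real.exp (-((k:ℝ) * Real.log c)) = (c⁻¹)^k := by
  rw [show -((k:ℝ) * Real.log c) = (k:ℝ) * Real.log c⁻¹ by rw [Real.log_inv]; ring,
    Real.exp_nat_mul, Real.exp_log (by positivity)]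

/-- Tail bound for degree-type events. -/
lemma deg_tail {n : ℕ} {p : ℝ} (hp0 : 0 ≤ p) (hp1 : p ≤ 1)
    (hnp : Real.log n ≤ n*p) (hL : 0 ≤ Real.log n) (hn1 : 1 ≤ n) (v : Fin n) :
    prG n p (fun G => 4*(n:ℝ)*p ≤ (cnt G (pairS {v} (Finset.univ.erase v)) : ℝ))
      ≤ 1/(n:ℝ)^2 := by
  have hd : Disjoint {v} (Finset.univ.erase v) := by
    simp [Finset.disjoint_singleton_left]
  have hnp0 : (0:ℝ) ≤ (n:ℝ)*p := by positivity
  have hn0 : (0:ℝ) < n := by exact_mod_cast hn1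
  have hlam : (0:ℝ) ≤ Real.log 3 := by linarith [one_le_log_three]
  refine le_trans (prG_tail_le hp0 hp1 _ (pairS_subset_T hd) (4*(n:ℝ)*p) (Real.log 3) hlam) ?_
  rw [Real.exp_log (by norm_num : (0:ℝ) < 3)]
  have hm : ((pairS {v} (Finset.univ.erase v)).card : ℝ) ≤ (n:ℝ) := by
    rw [card_pairS hd]
    have : ({v} : Finset (Fin n)).card * (Finset.univ.erase v).card = n - 1 := by
      rw [Finset.card_singleton, one_mul, Finset.card_erase_of_mem (Finset.mem_univ v),
        Finset.card_univ, Fintype.card_fin]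
    rw [this]
    exact_mod_cast Nat.sub_le n 1
  have hbase : (0:ℝ) ≤ (1-p) + p*3 := by linarith
  have hbase2 : (1-p) + p*3 ≤ Real.exp (2*p) := by
    have := Real.add_one_le_exp (2*p)
    linarith
  have hpow : ((1-p) + p*3) ^ (pairS {v} (Finset.univ.erase v)).card
      ≤ Real.exp (2*p*n) := by
    calc ((1-p) + p*3) ^ (pairS {v} (Finset.univ.erase v)).card
        ≤ (Real.exp (2*p)) ^ (pairS {v} (Finset.univ.erase v)).card :=
          pow_le_pow_left₀ hbase hbase2 _
      _ = Real.exp (((pairS {v} (Finset.univ.erase v)).card : ℝ) * (2*p)) := by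
          rw [Real.exp_nat_mul]
      _ ≤ Real.exp (2*p*n) := by
          apply Real.exp_le_exp.mpr
          have h2p : (0:ℝ) ≤ 2*p := by linarith
          nlinarith [hm]
  have hexp1 : Real.exp (-(Real.log 3 * (4*(n:ℝ)*p))) ≤ Real.exp (-(4*(n:ℝ)*p)) := by
    apply Real.exp_le_exp.mpr
    nlinarith [one_le_log_three]
  calc Real.exp (-(Real.log 3 * (4*(n:ℝ)*p))) * ((1-p) + p*3) ^ (pairS {v} (Finset.univ.erase v)).card
      ≤ Real.exp (-(4*(n:ℝ)*p)) * Real.exp (2*p*n) := by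
        apply mul_le_mul hexp1 hpow (by positivity) (by positivity)
    _ = Real.exp (2*p*n - 4*n*p) := by rw [← Real.exp_add]; ring_nf
    _ ≤ Real.exp (-(2 * Real.log n)) := by
        apply Real.exp_le_exp.mpr
        nlinarith
    _ = ((n:ℝ)⁻¹)^2 := by
        have := exp_neg_mul_log hn0 2
        push_cast at this
        rw [← this]
    _ = 1/(n:ℝ)^2 := by rw [inv_pow]; ring

/-- Tail bound for pair events. -/
lemma pair_tail {n : ℕ} {p : ℝ} (hp0 : 0 ≤ p) (hp1 : p ≤ 1) (hL : 3000 ≤ Real.log n)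
    (hnp : Real.log n ≤ (n:ℝ)*p) (A B : Finset (Fin n)) (hd : Disjoint A B)
    (hA1 : 1 ≤ A.card) (hab : A.card ≤ B.card) (h25 : B.card ≤ 25*A.card)
    (hlow : (0.8*((n:ℝ)*p))^2 ≤ (A.card:ℝ)*B.card) :
    prG n p (fun G => 0.8*(n:ℝ)*p*Real.sqrt ((A.card:ℝ)*B.card) ≤ (cnt G (pairS A B) : ℝ))
      ≤ ((A.card:ℝ)/(Real.exp 1*n))^A.card * ((B.card:ℝ)/(Real.exp 1*n))^B.card
          * ((n:ℝ)⁻¹)^4 := by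
  have ha1 : (1:ℝ) ≤ (A.card:ℝ) := by exact_mod_cast hA1
  have hab' : (A.card:ℝ) ≤ (B.card:ℝ) := by exact_mod_cast hab
  have h25' : (B.card:ℝ) ≤ 25*(A.card:ℝ) := by exact_mod_cast h25
  have habn : (A.card:ℝ) + (B.card:ℝ) ≤ (n:ℝ) := by
    have h1 : A.card + B.card ≤ n := by
      rw [← Finset.card_union_of_disjoint hd]
      calc (A ∪ B).card ≤ (Finset.univ : Finset (Fin n)).card := Finset.card_le_univ _
        _ = n := by rw [Finset.card_univ, Fintype.card_fin]
    exact_mod_cast h1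
  have hb1 : (1:ℝ) ≤ (B.card:ℝ) := le_trans ha1 hab'
  have hn0 : (0:ℝ) < (n:ℝ) := by linarith
  have hab0 : (0:ℝ) ≤ (A.card:ℝ)*B.card := by positivity
  have hs2 : Real.sqrt ((A.card:ℝ)*B.card)^2 = (A.card:ℝ)*B.card := Real.sq_sqrt hab0
  have hs1 : (1:ℝ) ≤ Real.sqrt ((A.card:ℝ)*B.card) := by
    rw [show (1:ℝ) = Real.sqrt 1 by simp]
    exact Real.sqrt_le_sqrt (by nlinarith)
  have hs0 : (0:ℝ) < Real.sqrt ((A.card:ℝ)*B.card) := by linarith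
  have hsn2 : Real.sqrt ((A.card:ℝ)*B.card) ≤ (n:ℝ)/2 := by nlinarith
  have hr16 : (1.6:ℝ) ≤ 0.8*(n:ℝ)/Real.sqrt ((A.card:ℝ)*B.card) := by
    rw [le_div_iff₀ hs0]; nlinarith
  have hr0 : (0:ℝ) < 0.8*(n:ℝ)/Real.sqrt ((A.card:ℝ)*B.card) := by linarith
  have hlam : (0:ℝ) ≤ Real.log (0.8*(n:ℝ)/Real.sqrt ((A.card:ℝ)*B.card)) :=
    Real.log_nonneg (by linarith)
  refine le_trans (prG_tail_le hp0 hp1 _ (pairS_subset_T hd)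
    (0.8*(n:ℝ)*p*Real.sqrt ((A.card:ℝ)*B.card))
    (Real.log (0.8*(n:ℝ)/Real.sqrt ((A.card:ℝ)*B.card))) hlam) ?_
  rw [Real.exp_log hr0]
  have hm : ((pairS A B).card : ℝ) = (A.card:ℝ)*B.card := by
    rw [card_pairS hd]; push_cast; ring
  have hbase : (0:ℝ) ≤ (1-p) + p*(0.8*(n:ℝ)/Real.sqrt ((A.card:ℝ)*B.card)) := by nlinarith
  have hbase2 : (1-p) + p*(0.8*(n:ℝ)/Real.sqrt ((A.card:ℝ)*B.card))
      ≤ Real.exp (p*(0.8*(n:ℝ)/Real.sqrt ((A.card:ℝ)*B.card) - 1)) := by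
    have := Real.add_one_le_exp (p*(0.8*(n:ℝ)/Real.sqrt ((A.card:ℝ)*B.card) - 1))
    nlinarith [this]
  have hpow : ((1-p) + p*(0.8*(n:ℝ)/Real.sqrt ((A.card:ℝ)*B.card))) ^ (pairS A B).card
      ≤ Real.exp (p*(0.8*(n:ℝ)/Real.sqrt ((A.card:ℝ)*B.card) - 1) * ((A.card:ℝ)*B.card)) := by
    calc ((1-p) + p*(0.8*(n:ℝ)/Real.sqrt ((A.card:ℝ)*B.card))) ^ (pairS A B).card
        ≤ (Real.exp (p*(0.8*(n:ℝ)/Real.sqrt ((A.card:ℝ)*B.card) - 1))) ^ (pairS A B).card :=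
          pow_le_pow_left₀ hbase hbase2 _
      _ = Real.exp (((pairS A B).card:ℝ) * (p*(0.8*(n:ℝ)/Real.sqrt ((A.card:ℝ)*B.card) - 1))) := by
          rw [Real.exp_nat_mul]
      _ = _ := by rw [hm]; ring_nf
  have hmain := key_pair_ineq (n:ℝ) p (A.card:ℝ) (B.card:ℝ) (le_of_lt hn0) hp0 hL hnp
    ha1 hab' h25' habn hlow
  calc Real.exp (-(Real.log (0.8*(n:ℝ)/Real.sqrt ((A.card:ℝ)*B.card))
          * (0.8*(n:ℝ)*p*Real.sqrt ((A.card:ℝ)*B.card))))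
        * ((1-p) + p*(0.8*(n:ℝ)/Real.sqrt ((A.card:ℝ)*B.card))) ^ (pairS A B).card
      ≤ Real.exp (-(Real.log (0.8*(n:ℝ)/Real.sqrt ((A.card:ℝ)*B.card))
          * (0.8*(n:ℝ)*p*Real.sqrt ((A.card:ℝ)*B.card))))
        * Real.exp (p*(0.8*(n:ℝ)/Real.sqrt ((A.card:ℝ)*B.card) - 1) * ((A.card:ℝ)*B.card)) := by
        exact mul_le_mul_of_nonneg_left hpow (by positivity)
    _ = Real.exp (p*(0.8*(n:ℝ)/Real.sqrt ((A.card:ℝ)*B.card) - 1) * ((A.card:ℝ)*B.card)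
          - Real.log (0.8*(n:ℝ)/Real.sqrt ((A.card:ℝ)*B.card))
            * (0.8*(n:ℝ)*p*Real.sqrt ((A.card:ℝ)*B.card))) := by
        rw [← Real.exp_add]; ring_nf
    _ ≤ Real.exp (-((A.card:ℝ) * Real.log (Real.exp 1 * n / A.card)
          + (B.card:ℝ) * Real.log (Real.exp 1 * n / B.card) + 4 * Real.log n)) :=
        Real.exp_le_exp.mpr hmain
    _ = _ := by
        rw [show -((A.card:ℝ) * Real.log (Real.exp 1 * n / A.card)
            + (B.card:ℝ) * Real.log (Real.exp 1 * n / B.card) + 4 * Real.log n)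
          = (-((A.card:ℝ) * Real.log (Real.exp 1 * n / A.card)))
            + (-((B.card:ℝ) * Real.log (Real.exp 1 * n / B.card)))
            + (-((4:ℕ) * Real.log n)) by push_cast; ring]
        rw [Real.exp_add, Real.exp_add]
        have hA : Real.exp (-((A.card:ℝ) * Real.log (Real.exp 1 * n / A.card)))
            = ((A.card:ℝ)/(Real.exp 1*n))^A.card := by
          rw [exp_neg_mul_log (by positivity) A.card, inv_div]
        have hB : Real.exp (-((B.card:ℝ) * Real.log (Real.exp 1 * n / B.card)))
            = ((B.card:ℝ)/(Real.exp 1*n))^B.card := by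
          rw [exp_neg_mul_log (by positivity) B.card, inv_div]
        have hN : Real.exp (-((4:ℕ) * Real.log n)) = ((n:ℝ)⁻¹)^4 :=
          exp_neg_mul_log hn0 4
        rw [hA, hB, hN]

lemma prG_of_false {n : ℕ} {p : ℝ} {A : SimpleGraph (Fin n) → Prop} (h : ∀ G, ¬ A G) :
    prG n p A = 0 := by
  rw [prG_def]
  exact Finset.sum_eq_zero fun E _ => if_neg (h _)

/-- The main estimate. -/
lemma main_estimate (n : ℕ) (p : ℝ) (hL : 3000 ≤ Real.log n)
    (hplow : Real.log n / n ≤ p) (hp1 : p ≤ 1) :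
    1 - 5/(n:ℝ) ≤ prG n p (fun G =>
      ∀ A B : Finset (Fin n), Disjoint A B → A.Nonempty → B.Nonempty →
        (eAB G A B : ℝ) < 0.8 * (n : ℝ) * p * Real.sqrt ((A.card : ℝ) * B.card)) := by
  have hn1 : (1:ℝ) < (n:ℝ) := by
    by_contra hc
    push_neg at hc
    have := Real.log_nonpos (by positivity) hc
    linarith
  have hn0 : (0:ℝ) < (n:ℝ) := by linarith
  have hnn1 : 1 ≤ n := by
    have : 0 < n := by exact_mod_cast hn0
    omega
  have hL0 : (0:ℝ) ≤ Real.log n := by linarith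
  have hnp : Real.log n ≤ (n:ℝ)*p := by
    rw [div_le_iff₀ hn0] at hplow
    linarith
  have hp0 : 0 ≤ p := by
    have : (0:ℝ) ≤ Real.log n / n := by positivity
    linarith
  have hnp0 : (0:ℝ) ≤ (n:ℝ)*p := by positivity
  -- the family of bad events
  set Bad : (Fin n ⊕ (Finset (Fin n) × Finset (Fin n))) → SimpleGraph (Fin n) → Prop :=
    fun i G => match i with
      | Sum.inl v => 4*(n:ℝ)*p ≤ (cnt G (pairS {v} (Finset.univ.erase v)) : ℝ)
      | Sum.inr z => (Disjoint z.1 z.2 ∧ 1 ≤ z.1.card ∧ z.1.card ≤ z.2.card ∧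
            z.2.card ≤ 25*z.1.card ∧ (0.8*((n:ℝ)*p))^2 ≤ (z.1.card:ℝ)*z.2.card) ∧
          0.8*(n:ℝ)*p*Real.sqrt ((z.1.card:ℝ)*z.2.card) ≤ (cnt G (pairS z.1 z.2) : ℝ)
    with hBad
  have himp : ∀ G : SimpleGraph (Fin n),
      (∀ i ∈ (Finset.univ : Finset (Fin n ⊕ (Finset (Fin n) × Finset (Fin n)))), ¬ Bad i G) →
      (∀ A B : Finset (Fin n), Disjoint A B → A.Nonempty → B.Nonempty →
        (eAB G A B : ℝ) < 0.8 * (n : ℝ) * p * Real.sqrt ((A.card : ℝ) * B.card)) := by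
    intro G hgood
    apply deterministic hnp0 G
    · intro v
      have h := hgood (Sum.inl v) (Finset.mem_univ _)
      rw [hBad] at h
      exact not_le.mp h
    · intro A B hd h1c hcc hbb hsq
      have h := hgood (Sum.inr (A, B)) (Finset.mem_univ _)
      rw [hBad] at h
      refine not_le.mp fun hle => h ⟨⟨hd, h1c, hcc, hbb, hsq⟩, hle⟩
  have step1 := prG_mono (n := n) hp0 hp1 himp
  have step2 := prG_union_bound hp0 hp1
    (Finset.univ : Finset (Fin n ⊕ (Finset (Fin n) × Finset (Fin n)))) Bad
  -- bound the sum of bad probabilities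
  have hsum : ∑ i ∈ (Finset.univ : Finset (Fin n ⊕ (Finset (Fin n) × Finset (Fin n)))),
      prG n p (Bad i) ≤ 5/(n:ℝ) := by
    rw [Fintype.sum_sum_type]
    have hdeg : ∑ v : Fin n, prG n p (Bad (Sum.inl v)) ≤ 1/(n:ℝ) := by
      have hone : ∀ v : Fin n, prG n p (Bad (Sum.inl v)) ≤ 1/(n:ℝ)^2 := by
        intro v
        exact deg_tail hp0 hp1 hnp hL0 hnn1 v
      calc ∑ v : Fin n, prG n p (Bad (Sum.inl v)) ≤ ∑ _v : Fin n, 1/(n:ℝ)^2 :=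
            Finset.sum_le_sum fun v _ => hone v
        _ = (n:ℝ) * (1/(n:ℝ)^2) := by
            rw [Finset.sum_const, Finset.card_univ, Fintype.card_fin, nsmul_eq_mul]
        _ = 1/(n:ℝ) := by field_simp
    have hpair : ∑ z : Finset (Fin n) × Finset (Fin n), prG n p (Bad (Sum.inr z))
        ≤ 4/(n:ℝ)^2 := by
      have hone : ∀ z : Finset (Fin n) × Finset (Fin n), prG n p (Bad (Sum.inr z))
          ≤ ((z.1.card:ℝ)/(Real.exp 1*n))^z.1.card * ((z.2.card:ℝ)/(Real.exp 1*n))^z.2.card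
              * ((n:ℝ)⁻¹)^4 := by
        intro z
        by_cases hcond : Disjoint z.1 z.2 ∧ 1 ≤ z.1.card ∧ z.1.card ≤ z.2.card ∧
            z.2.card ≤ 25*z.1.card ∧ (0.8*((n:ℝ)*p))^2 ≤ (z.1.card:ℝ)*z.2.card
        · obtain ⟨hd, h1c, hcc, hbb, hsq⟩ := hcond
          refine le_trans (prG_mono hp0 hp1 ?_) (pair_tail hp0 hp1 hL hnp z.1 z.2 hd h1c hcc hbb hsq)
          intro G hG
          exact hG.2
        · rw [show prG n p (Bad (Sum.inr z)) = 0 from prG_of_false fun G hG => hcond hG.1]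
          positivity
      calc ∑ z : Finset (Fin n) × Finset (Fin n), prG n p (Bad (Sum.inr z))
          ≤ ∑ z : Finset (Fin n) × Finset (Fin n),
            ((z.1.card:ℝ)/(Real.exp 1*n))^z.1.card * ((z.2.card:ℝ)/(Real.exp 1*n))^z.2.card
              * ((n:ℝ)⁻¹)^4 := Finset.sum_le_sum fun z _ => hone z
        _ = (∑ A : Finset (Fin n), ((A.card:ℝ)/(Real.exp 1*n))^A.card)
            * (∑ B : Finset (Fin n), ((B.card:ℝ)/(Real.exp 1*n))^B.card) * ((n:ℝ)⁻¹)^4 := by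
            rw [Fintype.sum_prod_type]
            rw [Finset.sum_mul_sum]
            rw [Finset.sum_mul]
            refine Finset.sum_congr rfl fun A _ => ?_
            rw [Finset.sum_mul]
        _ ≤ ((n:ℝ)+1) * ((n:ℝ)+1) * ((n:ℝ)⁻¹)^4 := by
            have hV := sum_V_le n hnn1
            have hVnn : (0:ℝ) ≤ ∑ A : Finset (Fin n), ((A.card:ℝ)/(Real.exp 1*n))^A.card :=
              Finset.sum_nonneg fun A _ => by positivity
            have h4 : (0:ℝ) ≤ ((n:ℝ)⁻¹)^4 := by positivity
            apply mul_le_mul_of_nonneg_right _ h4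
            apply mul_le_mul hV hV hVnn (by linarith)
        _ ≤ 4/(n:ℝ)^2 := by
            rw [div_eq_mul_inv, ]
            have h1 : ((n:ℝ)+1)*((n:ℝ)+1) ≤ 4*(n:ℝ)^2 := by nlinarith
            have h2 : ((n:ℝ)⁻¹)^4 = ((n:ℝ)^2)⁻¹ * ((n:ℝ)^2)⁻¹ := by
              rw [← inv_pow]; ring
            rw [h2, ← mul_assoc]
            have h3 : ((n:ℝ)+1)*((n:ℝ)+1)*((n:ℝ)^2)⁻¹ ≤ 4 := by
              rw [mul_inv_le_iff₀ (by positivity)]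
              linarith
            exact mul_le_mul_of_nonneg_right h3 (by positivity)
    have h42 : 4/(n:ℝ)^2 ≤ 4/(n:ℝ) := by
      apply div_le_div_of_nonneg_left (by norm_num) hn0
      nlinarith
    calc ∑ v : Fin n, prG n p (Bad (Sum.inl v))
          + ∑ z : Finset (Fin n) × Finset (Fin n), prG n p (Bad (Sum.inr z))
        ≤ 1/(n:ℝ) + 4/(n:ℝ)^2 := add_le_add hdeg hpair
      _ ≤ 1/(n:ℝ) + 4/(n:ℝ) := by linarith
      _ = 5/(n:ℝ) := by ring
  linarith [step1, step2, hsum]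

lemma nat_log_nonneg (n : ℕ) : 0 ≤ Real.log n := by
  rcases Nat.eq_zero_or_pos n with rfl | hn
  · simp
  · exact Real.log_nonneg (by exact_mod_cast hn)

end AAS

/-- for `p ≥ ln n / n`, a.a.s. every pair of disjoint (nonempty) vertex
sets `A`, `B` of `G(n,p)` spans fewer than `0.8·np·√(|A||B|)` edges. -/
theorem aas_edge_bound (p : ℕ → ℝ)
    (hp : ∀ n : ℕ, Real.log n / n ≤ p n) (hp1 : ∀ n, p n ≤ 1) :
    Tendsto (fun n : ℕ => prG n (p n) (fun G =>
      ∀ A B : Finset (Fin n), Disjoint A B → A.Nonempty → B.Nonempty →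
        (eAB G A B : ℝ) < 0.8 * (n : ℝ) * p n * Real.sqrt ((A.card : ℝ) * B.card)))
      atTop (nhds 1) := by
  have hp0 : ∀ n : ℕ, 0 ≤ p n := by
    intro n
    refine le_trans ?_ (hp n)
    have := AAS.nat_log_nonneg n
    positivity
  have hg : Tendsto (fun n : ℕ => 1 - 5/(n:ℝ)) atTop (nhds 1) := by
    have h5 : Tendsto (fun n : ℕ => (5:ℝ)/(n:ℝ)) atTop (nhds 0) :=
      tendsto_const_div_atTop_nhds_zero_nat 5
    simpa using tendsto_const_nhds.sub h5
  refine tendsto_of_tendsto_of_tendsto_of_le_of_le' hg tendsto_const_nhds ?_ ?_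
  · have hev : ∀ᶠ n : ℕ in atTop, (3000:ℝ) ≤ Real.log n :=
      (Real.tendsto_log_atTop.comp tendsto_natCast_atTop_atTop).eventually_ge_atTop 3000
    filter_upwards [hev] with n hn
    exact AAS.main_estimate n (p n) hn (hp n) (hp1 n)
  · filter_upwards with n
    exact AAS.prG_le_one (hp0 n) (hp1 n) _
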